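/- Let K be a field and let f and g be relatively prime polynomials in K[x], not both constant. Then the polynomial f(x) + t·g(x), regarded as a polynomial in x with coefficients in the rational function field K(t), is irreducible over K(t). -/
import Mathlib


open Polynomial
open Polynomial

noncomputable def swapRH (R : Type*) [CommSemiring R] : R[X][X] →+* R[X][X] :=
  eval₂RingHom (eval₂RingHom (C.comp C) X) (C X)

lemma swapRH_C {R : Type*} [CommSemiring R] (p : R[X]) :
    swapRH R (C p) = p.map C := by
  simp only [swapRH, coe_eval₂RingHom, eval₂_C]
  rfl

lemma swapRH_X {R : Type*} [CommSemiring R] : swapRH R X = C X := by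
  simp only [swapRH, coe_eval₂RingHom, eval₂_X]

lemma swapRH_comp {R : Type*} [CommSemiring R] :
    (swapRH R).comp (swapRH R) = RingHom.id _ := by
  apply ringHom_ext'
  · apply ringHom_ext'
    · ext r
      simp [swapRH_C, Polynomial.map_C]
    · have : ((swapRH R).comp (swapRH R)).comp (C : R[X] →+* R[X][X]) X = C X := by
        rw [RingHom.comp_apply, RingHom.comp_apply, swapRH_C, Polynomial.map_X, swapRH_X]
      simpa using this
  · rw [RingHom.comp_apply, swapRH_X, swapRH_C, Polynomial.map_X, RingHom.id_apply]

/-- swap of the two variables of `R[X][X]` as a ring equivalence -/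
noncomputable def swapE (R : Type*) [CommSemiring R] : R[X][X] ≃+* R[X][X] :=
  RingEquiv.ofRingHom (swapRH R) (swapRH R) swapRH_comp swapRH_comp

open Polynomial

lemma aux_unit {K : Type*} [Field K] {f g : K[X]} (hcop : IsCoprime f g) {a b : K[X][X]}
    (hab : C f + C g * X = a * b) (ha : a.natDegree = 0) : IsUnit a := by
  obtain ⟨c, rfl⟩ := Polynomial.natDegree_eq_zero.mp ha
  rw [Polynomial.isUnit_C]
  refine hcop.isUnit_of_dvd' ⟨b.coeff 0, ?_⟩ ⟨b.coeff 1, ?_⟩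
  · have := congrArg (fun p => Polynomial.coeff p 0) hab
    simpa using this
  · have := congrArg (fun p => Polynomial.coeff p 1) hab
    simpa using this

lemma irred_G {K : Type*} [Field K] (f g : K[X]) (hcop : IsCoprime f g)
    (hnc : 0 < f.natDegree ∨ 0 < g.natDegree) :
    Irreducible (C f + C g * X : K[X][X]) := by
  have hg : g ≠ 0 := by
    rintro rfl
    rw [isCoprime_zero_right] at hcop
    have := Polynomial.natDegree_eq_zero_of_isUnit hcop
    simp [this] at hnc
  have hdeg : (C f + C g * X : K[X][X]).natDegree = 1 := by
    rw [add_comm]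
    exact natDegree_linear (by simpa using hg)
  have h0 : (C f + C g * X : K[X][X]) ≠ 0 := fun h => by simp [h] at hdeg
  constructor
  · exact fun h => by simpa [Polynomial.natDegree_eq_zero_of_isUnit h] using hdeg
  · intro a b hab
    have ha0 : a ≠ 0 := fun h => h0 (by simp [hab, h])
    have hb0 : b ≠ 0 := fun h => h0 (by simp [hab, h])
    have hsum : a.natDegree + b.natDegree = 1 := by
      rw [← natDegree_mul ha0 hb0, ← hab, hdeg]
    rcases Nat.eq_zero_or_pos a.natDegree with h | h
    · exact Or.inl (aux_unit hcop hab h)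
    · have hb : b.natDegree = 0 := by omega
      exact Or.inr (aux_unit hcop (hab.trans (mul_comm a b)) hb)

open Polynomial

section main
variable {K : Type*} [Field K]

lemma coeffF (f g : K[X]) (n : ℕ) :
    ((f.map (C : K →+* K[X]) + C X * g.map C).coeff n : K[X])
      = C (f.coeff n) + X * C (g.coeff n) := by
  simp [coeff_map, coeff_C_mul]

lemma swap_G (f g : K[X]) :
    swapRH K (C f + C g * X) = f.map C + C X * g.map C := by
  rw [map_add, map_mul, swapRH_C, swapRH_C, swapRH_X, mul_comm]

theorem stmt_3'' (f g : Polynomial K)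
    (hcop : IsCoprime f g) (hnc : 0 < f.natDegree ∨ 0 < g.natDegree) :
    Irreducible (f.map (algebraMap K (RatFunc K)) +
      Polynomial.C RatFunc.X * g.map (algebraMap K (RatFunc K))) := by
  letI := Classical.decEq K
  set F₀ : K[X][X] := f.map C + C X * g.map C with hF₀
  -- F₀ is irreducible, being the image of the irreducible `C f + C g * X` under swap
  have hirr : Irreducible F₀ := by
    rw [hF₀, ← swap_G f g]
    exact (irred_G f g hcop hnc).map (swapE K)
  -- F₀ has positive degree
  have hpos : 0 < F₀.natDegree := by
    rcases le_total f.natDegree g.natDegree with h | h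
    · have hn : 0 < g.natDegree := by omega
      have hg : g ≠ 0 := fun h0 => by simp [h0] at hn
      have hne : F₀.coeff g.natDegree ≠ 0 := by
        rw [hF₀, coeffF]
        intro hc
        have := congrArg (fun p => Polynomial.coeff p 1) hc
        simp [coeff_natDegree, hg] at this
      calc 0 < g.natDegree := hn
        _ ≤ F₀.natDegree := le_natDegree_of_ne_zero hne
    · have hn : 0 < f.natDegree := by omega
      have hf : f ≠ 0 := fun h0 => by simp [h0] at hn
      have hne : F₀.coeff f.natDegree ≠ 0 := by
        rw [hF₀, coeffF]
        intro hc
        have := congrArg (fun p => Polynomial.coeff p 0) hc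
        simp [coeff_natDegree] at this
        exact hf this
      calc 0 < f.natDegree := hn
        _ ≤ F₀.natDegree := le_natDegree_of_ne_zero hne
  have hF0 : F₀ ≠ 0 := fun h => by simp [h] at hpos
  -- F₀ is primitive
  have hprim : F₀.IsPrimitive := by
    intro r hr
    obtain ⟨h, hh⟩ := hr
    rcases hirr.isUnit_or_isUnit hh with hu | hu
    · exact Polynomial.isUnit_C.mp hu
    · exfalso
      have hr0 : (C r : K[X][X]) ≠ 0 := fun h0 => hF0 (by rw [hh, h0, zero_mul])
      have hh0 : h ≠ 0 := fun h0 => hF0 (by rw [hh, h0, mul_zero])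
      have : F₀.natDegree = (C r : K[X][X]).natDegree + h.natDegree := by
        rw [hh]; exact natDegree_mul hr0 hh0
      rw [natDegree_C, natDegree_eq_zero_of_isUnit hu] at this
      omega
  -- Gauss's lemma
  have := (hprim.irreducible_iff_irreducible_map_fraction_map
    (K := RatFunc K)).mp hirr
  have hmap : F₀.map (algebraMap K[X] (RatFunc K)) =
      f.map (algebraMap K (RatFunc K)) +
        Polynomial.C RatFunc.X * g.map (algebraMap K (RatFunc K)) := by
    rw [hF₀, Polynomial.map_add, Polynomial.map_mul, Polynomial.map_C,
      Polynomial.map_map, Polynomial.map_map, RatFunc.algebraMap_X,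
      RatFunc.algebraMap_comp_C, ← RatFunc.algebraMap_eq_C]
  rwa [hmap] at this

end main


/-- Let `K` be a field and let `f` and `g` be relatively prime
polynomials in `K[x]`, not both constant.  Then `f(x) + t·g(x)` is irreducible as a
polynomial in `x` over the rational function field `K(t)`. -/
theorem stmt_3 (K : Type*) [Field K] (f g : Polynomial K)
    (hcop : IsCoprime f g) (hnc : 0 < f.natDegree ∨ 0 < g.natDegree) :
    Irreducible (f.map (algebraMap K (RatFunc K)) +
      Polynomial.C RatFunc.X * g.map (algebraMap K (RatFunc K))) :=
  stmt_3'' f g hcop hnc
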